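/- The set of ratios β/α arising from positive primitive Pythagorean triplets (pairwise coprime positive integers with α² + β² = γ²) is dense in (0, ∞). -/

import Mathlib

open Filter Topology

private lemma coprime_of_no_common_prime (a b : ℕ)
    (h : ∀ p, p.Prime → p ∣ a → p ∣ b → False) : Nat.Coprime a b := by
  by_contra hc
  obtain ⟨p, hp, hpd⟩ := Nat.exists_prime_and_dvd hc
  exact h p hp (hpd.trans (Nat.gcd_dvd_left a b)) (hpd.trans (Nat.gcd_dvd_right a b))

private lemma prime_eq_two_of_dvd_two_pow {p e : ℕ} (hp : p.Prime) (h : p ∣ 2^e) : p = 2 :=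
  (Nat.prime_dvd_prime_iff_eq hp Nat.prime_two).mp (hp.dvd_of_dvd_pow h)

/-- The key membership lemma: for odd N < 2^(k+1), the ratio of the
primitive triple gives a member of the set. -/
private lemma triple_mem (k N : ℕ) (hNodd : Odd N) (hNpos : 0 < N)
    (hlt : N < 2^(k+1)) :
    ∃ α β γ : ℕ, 0 < α ∧ 0 < β ∧ 0 < γ ∧
      α^2 + β^2 = γ^2 ∧ Nat.Coprime α β ∧ Nat.Coprime α γ ∧ Nat.Coprime β γ ∧
      (2*((N:ℝ)/2^(k+1)))/(1 - ((N:ℝ)/2^(k+1))^2) = (β : ℝ) / α := by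
  set M : ℕ := 2^(k+1) with hM
  have hMpos : 0 < M := Nat.pow_pos (by norm_num)
  have hle : N^2 ≤ M^2 := Nat.pow_le_pow_left hlt.le 2
  have hltsq : N^2 < M^2 := Nat.pow_lt_pow_left hlt (by norm_num)
  have hMeven : Even M := by simp [hM, Nat.even_pow]
  have hM2even : Even (M^2) := (Nat.even_pow).mpr ⟨hMeven, by norm_num⟩
  have hN2odd : Odd (N^2) := hNodd.pow
  have hαodd : Odd (M^2 - N^2) := Nat.Even.sub_odd hle hM2even hN2odd
  have hγodd : Odd (M^2 + N^2) := hM2even.add_odd hN2odd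
  have hM2pow : M^2 = 2^(2*(k+1)) := by rw [hM, ← pow_mul, Nat.mul_comm]
  have hpN : ∀ p, p.Prime → p ∣ N → p ≠ 2 := by
    intro p hp hpn h2
    subst h2
    rw [Nat.odd_iff] at hNodd
    omega
  have hcop_αN : Nat.Coprime (M^2 - N^2) N := by
    apply coprime_of_no_common_prime
    intro p hp hpα hpN'
    have h1 : p ∣ N^2 := dvd_pow hpN' (by norm_num)
    have h2 : p ∣ M^2 := by
      have : (M^2 - N^2) + N^2 = M^2 := Nat.sub_add_cancel hle
      rw [← this]; exact Nat.dvd_add hpα h1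
    exact hpN p hp hpN' (prime_eq_two_of_dvd_two_pow hp (hM2pow ▸ h2))
  have hcop_γN : Nat.Coprime (M^2 + N^2) N := by
    apply coprime_of_no_common_prime
    intro p hp hpγ hpN'
    have h1 : p ∣ N^2 := dvd_pow hpN' (by norm_num)
    have h2 : p ∣ M^2 := by
      have : M^2 + N^2 - N^2 = M^2 := by omega
      rw [← this]; exact Nat.dvd_sub hpγ h1
    exact hpN p hp hpN' (prime_eq_two_of_dvd_two_pow hp (hM2pow ▸ h2))
  have hcop_α2 : Nat.Coprime (M^2 - N^2) 2 := Nat.coprime_two_right.mpr hαodd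
  have hcop_γ2 : Nat.Coprime (M^2 + N^2) 2 := Nat.coprime_two_right.mpr hγodd
  refine ⟨M^2 - N^2, 2*M*N, M^2 + N^2, ?_, ?_, ?_, ?_, ?_, ?_, ?_, ?_⟩
  · omega
  · positivity
  · positivity
  · zify [hle]; ring
  · -- Coprime (M^2 - N^2) (2*M*N)
    refine Nat.Coprime.mul_right (Nat.Coprime.mul_right hcop_α2 ?_) hcop_αN
    exact Nat.Coprime.pow_right _ hcop_α2
  · -- Coprime (M^2 - N^2) (M^2 + N^2)
    apply coprime_of_no_common_prime
    intro p hp hpα hpγ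
    have hpodd : p ≠ 2 := by
      intro h2; subst h2
      rw [Nat.odd_iff] at hαodd
      omega
    have hsum : (M^2 - N^2) + (M^2 + N^2) = 2 * M^2 := by omega
    have h2 : p ∣ 2 * M^2 := by rw [← hsum]; exact Nat.dvd_add hpα hpγ
    have : 2 * M^2 = 2^(2*(k+1)+1) := by rw [hM2pow, pow_succ, Nat.mul_comm]
    exact hpodd (prime_eq_two_of_dvd_two_pow hp (this ▸ h2))
  · -- Coprime (2*M*N) (M^2 + N^2)
    refine (Nat.Coprime.mul_right (Nat.Coprime.mul_right hcop_γ2 ?_) hcop_γN).symm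
    exact Nat.Coprime.pow_right _ hcop_γ2
  · -- ratio equation
    have hMr : ((M:ℝ)) = 2^(k+1) := by rw [hM]; push_cast; ring
    have hMne : (M:ℝ) ≠ 0 := by positivity
    have hcast : ((M^2 - N^2 : ℕ) : ℝ) = (M:ℝ)^2 - (N:ℝ)^2 := by
      push_cast [hle]; ring
    have hdne : (M:ℝ)^2 - (N:ℝ)^2 ≠ 0 := by
      have : (N:ℝ)^2 < (M:ℝ)^2 := by exact_mod_cast hltsq
      linarith
    rw [← hMr, hcast]
    push_cast
    field_simp

theorem stmt_13 :
    Set.Ioi (0 : ℝ) ⊆ closure {x : ℝ | ∃ α β γ : ℕ, 0 < α ∧ 0 < β ∧ 0 < γ ∧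
      α^2 + β^2 = γ^2 ∧ Nat.Coprime α β ∧ Nat.Coprime α γ ∧ Nat.Coprime β γ ∧
      x = (β : ℝ) / α} := by
  intro x hx
  simp only [Set.mem_Ioi] at hx
  set s : ℝ := Real.sqrt (x^2+1) with hs
  have hssq : s^2 = x^2 + 1 := Real.sq_sqrt (by positivity)
  have hs1 : 1 < s := by
    nlinarith [Real.sqrt_nonneg (x^2+1), hssq, hx]
  set t₀ : ℝ := (s - 1)/x with ht₀
  have ht0pos : 0 < t₀ := div_pos (by linarith) hx
  have ht0lt : t₀ < 1 := by
    rw [ht₀, div_lt_one hx]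
    nlinarith
  have hden : 0 < 1 - t₀^2 := by nlinarith
  have hg : 2*t₀/(1 - t₀^2) = x := by
    rw [ht₀]
    rw [div_eq_iff (by intro h; rw [ht₀] at hden; nlinarith [hden])]
    field_simp
    nlinarith [hssq]
  -- the dyadic approximating sequence
  set N : ℕ → ℕ := fun k => 2*⌊t₀*2^k⌋₊+1 with hN
  set t : ℕ → ℝ := fun k => (N k : ℝ)/2^(k+1) with ht
  have hF1 : ∀ k, (⌊t₀*2^k⌋₊ : ℝ) ≤ t₀*2^k := fun k => Nat.floor_le (by positivity)
  have hF2 : ∀ k, t₀*2^k < ⌊t₀*2^k⌋₊ + 1 := fun k => Nat.lt_floor_add_one _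
  have hbound : ∀ k, |t k - t₀| ≤ 1/2^(k+1) := by
    intro k
    have e : t k - t₀ = (2*(⌊t₀*2^k⌋₊:ℝ) + 1 - t₀*2^(k+1))/2^(k+1) := by
      simp only [ht, hN]
      push_cast
      field_simp
    rw [e, abs_div, abs_of_pos (by positivity : (0:ℝ) < 2^(k+1))]
    apply div_le_div_of_nonneg_right ?_ (by positivity)
    · rw [abs_le]
      have h1 := hF1 k
      have h2 := hF2 k
      have hp : (2:ℝ)^(k+1) = 2*2^k := by ring
      constructor <;> nlinarith
  have httend : Tendsto t atTop (𝓝 t₀) := by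
    rw [tendsto_iff_dist_tendsto_zero]
    simp only [Real.dist_eq]
    apply squeeze_zero (fun k => abs_nonneg _) hbound
    have : Tendsto (fun k : ℕ => ((1:ℝ)/2)^(k+1)) atTop (𝓝 0) :=
      (tendsto_pow_atTop_nhds_zero_of_lt_one (by norm_num) (by norm_num)).comp
        (tendsto_add_atTop_nat 1)
    convert this using 2 with k
    rw [div_pow, one_pow]
  have hcont : ContinuousAt (fun u : ℝ => 2*u/(1 - u^2)) t₀ :=
    ContinuousAt.div (by fun_prop) (by fun_prop) (ne_of_gt hden)
  have htend : Tendsto (fun k => 2*(t k)/(1 - (t k)^2)) atTop (𝓝 x) := by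
    rw [← hg]
    exact hcont.tendsto.comp httend
  apply mem_closure_of_tendsto htend
  filter_upwards with k
  have hNodd : Odd (N k) := ⟨⌊t₀*2^k⌋₊, rfl⟩
  have hNpos : 0 < N k := by simp [hN]
  have hFlt : ⌊t₀*2^k⌋₊ < 2^k := by
    rw [Nat.floor_lt (by positivity)]
    push_cast
    nlinarith [pow_pos (by norm_num : (0:ℝ) < 2) k]
  have hNlt : N k < 2^(k+1) := by
    have : (2:ℕ)^(k+1) = 2*2^k := by ring
    simp only [hN]; omega
  simp only [Set.mem_setOf_eq, ht]
  exact triple_mem k (N k) hNodd hNpos hNlt
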